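/- arXiv:0904.1823 — 8 statements merged into one kernel-verified Lean document; each statement's English description precedes it below -/
import Mathlib

section
/- A strict partition is uniquely determined by its Kerov interlacing coordinates: if λ and μ are strict partitions with X(λ) \ {0} = X(μ) \ {0} and Y(λ) = Y(μ), then λ = μ. -/
open Finset

/-- A strict partition is encoded as the finite set of its (distinct, positive) parts:
`S` is a strict partition iff `0 ∉ S`. -/
def IsStrictPartition (S : Finset ℕ) : Prop := 0 ∉ S

/-- The weight `|λ|` of a strict partition: the sum of its parts. -/
def wt (S : Finset ℕ) : ℕ := ∑ a ∈ S, a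

/-- The length `ℓ(λ)` of a strict partition: its number of parts. -/
def len (S : Finset ℕ) : ℕ := S.card

/-- The set `X(λ)` of addable contents of the strict partition `λ`:
the contents `x` of boxes that can be added to the shifted Young diagram.
A part `a ∈ S` gives the addable content `a` iff `a + 1` is not a part, and `0` is an
addable content iff `1` is not a part (i.e. `λ` is empty or its smallest part is `≥ 2`). -/
def Xset (S : Finset ℕ) : Finset ℕ :=
  (S.filter (fun x => x + 1 ∉ S)) ∪ (if 1 ∉ S then {0} else ∅)

/-- The set `Y(λ)` of removable contents of the strict partition `λ`:
`y ∈ Y(λ)` iff `y + 1` is a part and `y` is not a part. -/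
def Yset (S : Finset ℕ) : Finset ℕ :=
  (S.filter (fun p => p - 1 ∉ S)).image (fun p => p - 1)

/-- `λ + □(x)`: add to `λ` the box of content `x ∈ X(λ)`. -/
def addBox (S : Finset ℕ) (x : ℕ) : Finset ℕ :=
  if x = 0 then insert 1 S else insert (x + 1) (S.erase x)

/-- `λ − □(y)`: remove from `λ` the box of content `y ∈ Y(λ)`. -/
def removeBox (S : Finset ℕ) (y : ℕ) : Finset ℕ :=
  if y = 0 then S.erase 1 else insert y (S.erase (y + 1))

/-- `c(c+1)` as a real number. -/
def cc (t : ℕ) : ℝ := t * (t + 1)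

/-- The number `h(λ)` of standard shifted tableaux (with the doubled-edge convention):
`h(λ) = 2^{|λ|−ℓ(λ)} |λ|!/(λ_1!⋯λ_ℓ!) ∏_{i<j} (λ_i−λ_j)/(λ_i+λ_j)`. -/
noncomputable def hfun (S : Finset ℕ) : ℝ :=
  2 ^ (wt S - len S) * (Nat.factorial (wt S) : ℝ) / (∏ a ∈ S, (Nat.factorial a : ℝ)) *
    ∏ p ∈ S.offDiag.filter (fun p => p.2 < p.1), (((p.1 : ℝ) - p.2) / ((p.1 : ℝ) + p.2))

/-- The partial fraction coefficients `θ↑_x(λ)`, `x ∈ X(λ)`. -/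
noncomputable def thetaUp (S : Finset ℕ) (xh : ℕ) : ℝ :=
  if xh = 0 then (∏ y ∈ Yset S, cc y) / (∏ x ∈ (Xset S).erase 0, cc x)
  else (∏ y ∈ Yset S, (cc xh - cc y)) /
    (cc xh * ∏ x ∈ ((Xset S).erase 0).erase xh, (cc xh - cc x))

/-- The partial fraction coefficients `θ↓_y(λ)`, `y ∈ Y(λ)`. -/
noncomputable def thetaDown (S : Finset ℕ) (yh : ℕ) : ℝ :=
  (∏ x ∈ (Xset S).erase 0, (cc yh - cc x)) / (∏ y ∈ (Yset S).erase yh, (cc yh - cc y))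

/-- `Z_α(n) = α(α+2)⋯(α+2n−2)`. -/
noncomputable def Zfun (α : ℝ) (n : ℕ) : ℝ := ∏ k ∈ Finset.range n, (α + 2 * k)

/-- The multiplicative measure weight
`M_n^α(λ) = (h(λ)² 2^{ℓ−n}/n!) ⬝ ∏_{□∈λ}(c(□)(c(□)+1)+α) / Z_α(n)`. -/
noncomputable def Mw (α : ℝ) (n : ℕ) (S : Finset ℕ) : ℝ :=
  hfun S ^ 2 * 2 ^ len S / 2 ^ n / (Nat.factorial n : ℝ) *
    (∏ p ∈ S, ∏ c ∈ Finset.range p, (cc c + α)) / Zfun α n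

lemma Xerase_eq (S : Finset ℕ) (hS : 0 ∉ S) :
    (Xset S).erase 0 = S.filter (fun a => a + 1 ∉ S) := by
  ext n
  have hn0 : n ∈ S → n ≠ 0 := fun h h0 => hS (h0 ▸ h)
  by_cases h1 : (1 : ℕ) ∈ S <;>
    simp only [Xset, h1, if_pos, if_neg, not_true, not_false_iff, Finset.mem_erase,
      Finset.mem_union, Finset.mem_filter, Finset.mem_singleton, Finset.notMem_empty] <;>
    tauto

lemma Ymem_iff (S : Finset ℕ) (hS : 0 ∉ S) (n : ℕ) :
    n ∈ Yset S ↔ (n + 1 ∈ S ∧ n ∉ S) := by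
  simp only [Yset, Finset.mem_image, Finset.mem_filter]
  constructor
  · rintro ⟨p, ⟨hp, hp'⟩, rfl⟩
    have hp0 : p ≠ 0 := fun h => hS (h ▸ hp)
    have : p - 1 + 1 = p := by omega
    rw [this]
    exact ⟨hp, hp'⟩
  · rintro ⟨h1, h2⟩
    exact ⟨n + 1, ⟨h1, by simpa using h2⟩, by simp⟩

lemma mem_strict_iff (S : Finset ℕ) (hS : 0 ∉ S) (n : ℕ) :
    n ∈ S ↔ (n ∈ (Xset S).erase 0 ∨ (n + 1 ∈ S ∧ n ∉ Yset S)) := by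
  rw [Xerase_eq S hS, Finset.mem_filter, Ymem_iff S hS]
  by_cases h : n + 1 ∈ S <;> tauto

/-- **A strict partition is uniquely determined by its Kerov interlacing coordinates:**
if `X(λ) \ {0} = X(μ) \ {0}` and `Y(λ) = Y(μ)` then `λ = μ`. -/
theorem kerov_coordinates_determine (S T : Finset ℕ)
    (hS : IsStrictPartition S) (hT : IsStrictPartition T)
    (hX : (Xset S).erase 0 = (Xset T).erase 0) (hY : Yset S = Yset T) :
    S = T := by
  set B := (S ∪ T).sup id + 1 with hBdef
  have hB : ∀ n, B ≤ n → n ∉ S ∧ n ∉ T := by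
    intro n hn
    constructor <;> intro hmem
    · have : n ≤ (S ∪ T).sup id := Finset.le_sup (f := id) (Finset.mem_union_left _ hmem)
      omega
    · have : n ≤ (S ∪ T).sup id := Finset.le_sup (f := id) (Finset.mem_union_right _ hmem)
      omega
  have key : ∀ k n, B ≤ n + k → (n ∈ S ↔ n ∈ T) := by
    intro k
    induction k with
    | zero =>
      intro n h
      have := hB n (by omega)
      tauto
    | succ k ih =>
      intro n h
      rw [mem_strict_iff S hS, mem_strict_iff T hT, hX, hY, ih (n + 1) (by omega)]
  ext n
  exact key B n (by omega)
end

section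
/- For every strict partition λ: Σ_{x ∈ X(λ)} x(x+1) − Σ_{y ∈ Y(λ)} y(y+1) = 2|λ|. -/
open Finset

/-- **Proposition 1.5.** For every strict partition `λ`:
`∑_{x ∈ X(λ)} x(x+1) − ∑_{y ∈ Y(λ)} y(y+1) = 2|λ|`. -/
theorem kerov_sum_identity (S : Finset ℕ) (hS : IsStrictPartition S) :
    (∑ x ∈ Xset S, (x : ℤ) * (x + 1)) - (∑ y ∈ Yset S, (y : ℤ) * (y + 1)) =
      2 * (wt S : ℤ) := by
  classical
  have hpos : ∀ a ∈ S, 1 ≤ a := fun a ha =>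
    Nat.one_le_iff_ne_zero.mpr (fun h => hS (h ▸ ha))
  set f : ℕ → ℤ := fun a => (a : ℤ) * (a + 1) with hf
  set T : Finset ℕ := S.image (fun a => a - 1) with hT
  -- membership in T
  have hTmem : ∀ b, b ∈ T ↔ b + 1 ∈ S := by
    intro b
    simp only [hT, Finset.mem_image]
    constructor
    · rintro ⟨a, ha, rfl⟩
      have := hpos a ha
      rwa [Nat.sub_add_cancel this]
    · intro h
      exact ⟨b + 1, h, by simp⟩
  have hX : ∑ x ∈ Xset S, f x = ∑ a ∈ S \ T, f a := by
    have hcong : S.filter (fun x => x + 1 ∉ S) = S \ T := by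
      ext a
      simp [Finset.mem_filter, Finset.mem_sdiff, hTmem]
    unfold Xset
    rw [Finset.sum_union]
    · rw [hcong]
      split_ifs <;> simp [hf]
    · rw [Finset.disjoint_left]
      intro t ht1 ht2
      simp only [Finset.mem_filter] at ht1
      have h0 : t = 0 := by
        split_ifs at ht2 <;> simp_all
      exact hS (h0 ▸ ht1.1)
  have hY : ∑ y ∈ Yset S, f y = ∑ a ∈ T \ S, f a := by
    have : T \ S = (S.filter (fun p => p - 1 ∉ S)).image (fun p => p - 1) := by
      ext b
      simp only [Finset.mem_sdiff, Finset.mem_image, Finset.mem_filter, hTmem]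
      constructor
      · rintro ⟨hb1, hb2⟩
        exact ⟨b + 1, ⟨hb1, by simpa using hb2⟩, by simp⟩
      · rintro ⟨a, ⟨ha, ha2⟩, rfl⟩
        rw [Nat.sub_add_cancel (hpos a ha)]
        exact ⟨ha, ha2⟩
    rw [Yset, ← this]
  rw [hX, hY]
  rw [Finset.sum_sdiff_sub_sum_sdiff]
  have hTsum : ∑ a ∈ T, f a = ∑ a ∈ S, f (a - 1) := by
    rw [hT, Finset.sum_image]
    intro a ha b hb hab
    have := hpos a ha; have := hpos b hb
    beta_reduce at hab
    omega
  rw [hTsum, ← Finset.sum_sub_distrib]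
  have : ∀ a ∈ S, f a - f (a - 1) = 2 * (a : ℤ) := by
    intro a ha
    have h1 := hpos a ha
    obtain ⟨c, rfl⟩ := Nat.exists_eq_add_of_le h1
    simp only [hf]
    push_cast [Nat.add_sub_cancel_left]
    ring
  rw [Finset.sum_congr rfl this, ← Finset.mul_sum, wt]
  push_cast
  ring
end

section
/- For every strict partition λ of weight n and every x̂ ∈ X(λ): θ↑_{x̂}(λ) = h(λ+□(x̂)) / (h(λ) · (n+1)). That is, the partial-fraction coefficients θ↑ coincide with the Plancherel up transition probabilities of the Schur graph. -/
open Finset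

lemma cc_strictMono : StrictMono cc := by
  intro s t h
  unfold cc
  have hs : (s:ℝ) < t := by exact_mod_cast h
  have : (0:ℝ) ≤ s := by positivity
  nlinarith

lemma cc_inj {s t : ℕ} (h : cc s = cc t) : s = t := cc_strictMono.injective h

lemma cc_zero : cc 0 = 0 := by norm_num [cc]

lemma cc_ne_zero {t : ℕ} (h : t ≠ 0) : cc t ≠ 0 := by
  rw [← cc_zero]; exact fun he => h (cc_inj he)

lemma cc_sub_ne {s t : ℕ} (h : s ≠ t) : cc s - cc t ≠ 0 :=
  sub_ne_zero_of_ne (fun he => h (cc_inj he))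

lemma mem_Xset {S : Finset ℕ} {x : ℕ} :
    x ∈ Xset S ↔ (x ∈ S ∧ x + 1 ∉ S) ∨ (x = 0 ∧ 1 ∉ S) := by
  unfold Xset
  rcases em (1 ∈ S) with h1 | h1 <;> simp [h1] <;> tauto

lemma mem_Yset {S : Finset ℕ} (hS : 0 ∉ S) {y : ℕ} :
    y ∈ Yset S ↔ y + 1 ∈ S ∧ y ∉ S := by
  unfold Yset
  simp only [mem_image, mem_filter]
  constructor
  · rintro ⟨p, ⟨hp, hp1⟩, rfl⟩
    have : p ≠ 0 := fun h => hS (h ▸ hp)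
    have : p - 1 + 1 = p := Nat.succ_pred_eq_of_ne_zero this
    rw [this]; exact ⟨hp, hp1⟩
  · rintro ⟨h1, h2⟩
    exact ⟨y + 1, ⟨h1, by simpa using h2⟩, by simp⟩

lemma keyA (S : Finset ℕ) (hS : 0 ∉ S) (g : ℕ → ℝ) :
    (∏ x ∈ Xset S, g x) * (∏ b ∈ S, g (b - 1)) =
      (if 1 ∈ S then 1 else g 0) * (∏ b ∈ S, g b) * (∏ y ∈ Yset S, g y) := by
  have hY : (∏ y ∈ Yset S, g y) = ∏ p ∈ S.filter (fun p => p - 1 ∉ S), g (p - 1) := by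
    apply Finset.prod_image
    intro p hp q hq h
    have hp0 : p ≠ 0 := fun h' => hS (h' ▸ (mem_filter.1 hp).1)
    have hq0 : q ≠ 0 := fun h' => hS (h' ▸ (mem_filter.1 hq).1)
    simp only at h
    omega
  have hd : Disjoint (S.filter (fun x => x + 1 ∉ S)) (if 1 ∉ S then ({0}:Finset ℕ) else ∅) := by
    rcases em (1 ∈ S) with h1 | h1 <;> simp [h1, Finset.disjoint_left]
    intro a ha _; rintro rfl; exact hS ha
  have hX : (∏ x ∈ Xset S, g x) =
      (∏ x ∈ S.filter (fun x => x + 1 ∉ S), g x) * (if 1 ∈ S then 1 else g 0) := by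
    unfold Xset
    rw [Finset.prod_union hd]
    rcases em (1 ∈ S) with h1 | h1 <;> simp [h1]
  have hbij : (∏ b ∈ S.filter (fun b => b - 1 ∈ S), g (b - 1))
      = ∏ c ∈ S.filter (fun c => c + 1 ∈ S), g c := by
    apply Finset.prod_nbij' (fun b => b - 1) (fun c => c + 1)
    · intro b hb
      simp only [mem_filter] at hb ⊢
      have hb0 : b ≠ 0 := fun h' => hS (h' ▸ hb.1)
      constructor
      · exact hb.2
      · have : b - 1 + 1 = b := by omega
        rw [this]; exact hb.1
    · intro c hc
      simp only [mem_filter] at hc ⊢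
      exact ⟨hc.2, by simpa using hc.1⟩
    · intro b hb
      have hb0 : b ≠ 0 := fun h' => hS (h' ▸ (mem_filter.1 hb).1)
      omega
    · intro c _; omega
    · intro b _; rfl
  have hsplit1 : (∏ b ∈ S, g (b - 1)) =
      (∏ b ∈ S.filter (fun b => b - 1 ∈ S), g (b - 1)) *
        ∏ b ∈ S.filter (fun b => ¬ (b - 1 ∈ S)), g (b - 1) :=
    (Finset.prod_filter_mul_prod_filter_not S _ _).symm
  have hsplit2 : (∏ b ∈ S, g b) =
      (∏ b ∈ S.filter (fun b => b + 1 ∉ S), g b) *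
        ∏ b ∈ S.filter (fun b => ¬ (b + 1 ∉ S)), g b :=
    (Finset.prod_filter_mul_prod_filter_not S _ _).symm
  have hnn : (∏ b ∈ S.filter (fun b => ¬ (b + 1 ∉ S)), g b)
      = ∏ b ∈ S.filter (fun b => b + 1 ∈ S), g b := by
    apply Finset.prod_congr _ (fun _ _ => rfl)
    apply Finset.filter_congr; intro x _; tauto
  rw [hY, hX, hsplit1, hsplit2, hbij, hnn]
  ring


noncomputable def Ffun (S : Finset ℕ) : ℝ :=
  ∏ p ∈ S.offDiag.filter (fun p => p.2 < p.1), (((p.1 : ℝ) - p.2) / ((p.1 : ℝ) + p.2))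

noncomputable def dd (a b : ℕ) : ℝ :=
  if b < a then ((a:ℝ) - b) / ((a:ℝ) + b) else ((b:ℝ) - a) / ((b:ℝ) + a)

lemma hfun_eq (S : Finset ℕ) : hfun S =
    2 ^ (wt S - len S) * (Nat.factorial (wt S) : ℝ) /
      (∏ a ∈ S, (Nat.factorial a : ℝ)) * Ffun S := rfl

lemma Ffun_insert (E : Finset ℕ) (a : ℕ) (ha : a ∉ E) :
    Ffun (insert a E) = Ffun E * ∏ b ∈ E, dd a b := by
  have h1 : (({a} ×ˢ E).filter (fun p => p.2 < p.1)) =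
      (E.filter (fun b => b < a)).image (fun b => (a, b)) := by
    ext ⟨x, y⟩
    simp only [Finset.mem_filter, Finset.mem_product, Finset.mem_singleton, Finset.mem_image]
    constructor
    · rintro ⟨⟨rfl, hy⟩, hlt⟩; exact ⟨y, ⟨hy, hlt⟩, rfl⟩
    · rintro ⟨b, ⟨hb, hlt⟩, h⟩
      obtain ⟨rfl, rfl⟩ := Prod.mk.injEq .. ▸ h
      exact ⟨⟨rfl, hb⟩, hlt⟩
  have h2 : ((E ×ˢ {a}).filter (fun p => p.2 < p.1)) =
      (E.filter (fun b => a < b)).image (fun b => (b, a)) := by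
    ext ⟨x, y⟩
    simp only [Finset.mem_filter, Finset.mem_product, Finset.mem_singleton, Finset.mem_image]
    constructor
    · rintro ⟨⟨hx, rfl⟩, hlt⟩; exact ⟨x, ⟨hx, hlt⟩, rfl⟩
    · rintro ⟨b, ⟨hb, hlt⟩, h⟩
      obtain ⟨rfl, rfl⟩ := Prod.mk.injEq .. ▸ h
      exact ⟨⟨hb, rfl⟩, hlt⟩
  have hdA : Disjoint (E.offDiag.filter (fun p => p.2 < p.1))
      (({a} ×ˢ E).filter (fun p => p.2 < p.1)) := by
    simp only [Finset.disjoint_left, Finset.mem_filter, Finset.mem_product,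
      Finset.mem_singleton, Finset.mem_offDiag]
    rintro ⟨x, y⟩ ⟨⟨hx, _, _⟩, _⟩ ⟨⟨rfl, _⟩, _⟩
    exact ha hx
  have hdB : Disjoint ((E.offDiag ∪ {a} ×ˢ E).filter (fun p => p.2 < p.1))
      ((E ×ˢ {a}).filter (fun p => p.2 < p.1)) := by
    simp only [Finset.disjoint_left, Finset.mem_filter, Finset.mem_union, Finset.mem_product,
      Finset.mem_singleton, Finset.mem_offDiag]
    rintro ⟨x, y⟩ ⟨hmem, _⟩ ⟨⟨_, rfl⟩, hlt⟩
    rcases hmem with ⟨_, hy, _⟩ | ⟨_, hy⟩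
    · exact ha hy
    · exact ha hy
  unfold Ffun
  rw [Finset.offDiag_insert (s := E) (a := a) ha, Finset.filter_union, Finset.prod_union hdB,
    Finset.filter_union, Finset.prod_union hdA, h1, h2,
    Finset.prod_image (by intro x _ y _ h; simpa using h),
    Finset.prod_image (by intro x _ y _ h; simpa using h)]
  have e1 : (∏ b ∈ E.filter (fun b => b < a), (((a:ℕ):ℝ) - (b:ℝ)) / (((a:ℕ):ℝ) + b))
      = ∏ b ∈ E.filter (fun b => b < a), dd a b := by
    apply Finset.prod_congr rfl
    intro b hb
    rw [dd, if_pos (Finset.mem_filter.1 hb).2]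
  have e2 : (∏ b ∈ E.filter (fun b => a < b), (((b:ℕ):ℝ) - (a:ℝ)) / (((b:ℕ):ℝ) + a))
      = ∏ b ∈ E.filter (fun b => ¬ b < a), dd a b := by
    rw [show E.filter (fun b => ¬ b < a) = E.filter (fun b => a < b) from
      Finset.filter_congr (by intro x hx; have : x ≠ a := fun h => ha (h ▸ hx); omega)]
    apply Finset.prod_congr rfl
    intro b hb
    rw [dd, if_neg (by have := (Finset.mem_filter.1 hb).2; omega)]
  rw [e1, e2, mul_assoc, Finset.prod_filter_mul_prod_filter_not]


lemma dd_step (a b : ℕ) (ha : 1 ≤ a) (hb : 1 ≤ b) (hba : b ≠ a) (hba1 : b ≠ a + 1) :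
    dd (a + 1) b * (cc a - cc b) = dd a b * (cc a - cc (b - 1)) := by
  have hcb : ((b - 1 : ℕ) : ℝ) = (b : ℝ) - 1 := by
    have : (1:ℕ) ≤ b := hb
    push_cast [this]; ring
  have ha' : (1:ℝ) ≤ (a:ℝ) := by exact_mod_cast ha
  have hb' : (1:ℝ) ≤ (b:ℝ) := by exact_mod_cast hb
  rcases lt_trichotomy b a with h | h | h
  · have h' : (b:ℝ) < a := by exact_mod_cast h
    rw [dd, dd, if_pos (by omega), if_pos h]
    unfold cc
    rw [hcb]
    push_cast
    have d1 : (a:ℝ) + 1 + b ≠ 0 := by linarith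
    have d2 : (a:ℝ) + b ≠ 0 := by linarith
    field_simp
    ring
  · exact absurd h hba
  · have h2 : a + 1 < b := by omega
    have h2' : (a:ℝ) + 1 < b := by exact_mod_cast h2
    rw [dd, dd, if_neg (by omega), if_neg (by omega)]
    unfold cc
    rw [hcb]
    push_cast
    have d1 : (b:ℝ) + (a + 1) ≠ 0 := by linarith
    have d2 : (b:ℝ) + a ≠ 0 := by linarith
    field_simp
    ring

lemma len_le_wt (S : Finset ℕ) (hS : 0 ∉ S) : len S ≤ wt S := by
  unfold len wt
  calc S.card = ∑ _a ∈ S, 1 := by simp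
  _ ≤ ∑ a ∈ S, a := Finset.sum_le_sum (fun a ha => by
      have : a ≠ 0 := fun h => hS (h ▸ ha); omega)

lemma Ffun_pos (S : Finset ℕ) (hS : 0 ∉ S) : 0 < Ffun S := by
  apply Finset.prod_pos
  rintro ⟨x, y⟩ hp
  simp only [Finset.mem_filter, Finset.mem_offDiag] at hp
  obtain ⟨⟨hx, hy, _⟩, hlt⟩ := hp
  have hx0 : 0 < x := by
    rcases Nat.eq_zero_or_pos x with h | h
    · exact absurd (h ▸ hx) hS
    · exact h
  have h1 : (y:ℝ) < x := by exact_mod_cast hlt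
  have h2 : (0:ℝ) < x := by exact_mod_cast hx0
  have h3 : (0:ℝ) ≤ y := Nat.cast_nonneg y
  exact div_pos (by linarith) (by linarith)

lemma hfun_pos (S : Finset ℕ) (hS : 0 ∉ S) : 0 < hfun S := by
  rw [hfun_eq]
  have h1 : (0:ℝ) < ∏ a ∈ S, (Nat.factorial a : ℝ) :=
    Finset.prod_pos (fun a _ => by positivity)
  have h2 := Ffun_pos S hS
  have h3 : (0:ℝ) < (Nat.factorial (wt S) : ℝ) := by positivity
  positivity

lemma cc_diff (a : ℕ) (ha : 1 ≤ a) : cc a - cc (a - 1) = 2 * a := by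
  unfold cc
  have h : ((a - 1 : ℕ) : ℝ) = (a : ℝ) - 1 := by push_cast [ha]; ring
  rw [h]; ring

lemma hfun_step_pos (S : Finset ℕ) (hS : 0 ∉ S) (a : ℕ) (ha : a ∈ S) (ha1 : a + 1 ∉ S) :
    hfun (insert (a + 1) (S.erase a)) * (cc a * ∏ b ∈ S.erase a, (cc a - cc b))
      = hfun S * ((wt S : ℝ) + 1) * ∏ b ∈ S, (cc a - cc (b - 1)) := by
  set E := S.erase a with hE
  have haE : a ∉ E := Finset.notMem_erase a S
  have ha1E : a + 1 ∉ E := fun h => ha1 (Finset.mem_of_mem_erase h)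
  have hSE : S = insert a E := (Finset.insert_erase ha).symm
  have ha0 : 1 ≤ a := by
    rcases Nat.eq_zero_or_pos a with h | h
    · exact absurd (h ▸ ha) hS
    · exact h
  have hw2 : wt S = a + wt E := by rw [hSE, wt, Finset.sum_insert haE]; rfl
  have hle : len E + 1 ≤ a + wt E := by
    rw [← hw2]
    have hl2 : len S = len E + 1 := by rw [hSE, len, Finset.card_insert_of_notMem haE]; rfl
    rw [← hl2]; exact len_le_wt S hS
  have hN : (∏ b ∈ S, (cc a - cc (b - 1))) = (2 * a) * ∏ b ∈ E, (cc a - cc (b - 1)) := by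
    rw [hSE, Finset.prod_insert haE, cc_diff a ha0]
  have hprod : (∏ b ∈ E, dd (a + 1) b) * (∏ b ∈ E, (cc a - cc b))
      = (∏ b ∈ E, dd a b) * (∏ b ∈ E, (cc a - cc (b - 1))) := by
    rw [← Finset.prod_mul_distrib, ← Finset.prod_mul_distrib]
    apply Finset.prod_congr rfl
    intro b hb
    have hbS : b ∈ S := Finset.mem_of_mem_erase hb
    have hb1 : 1 ≤ b := by
      rcases Nat.eq_zero_or_pos b with h | h
      · exact absurd (h ▸ hbS) hS
      · exact h
    exact dd_step a b ha0 hb1 (Finset.ne_of_mem_erase hb) (fun h => ha1 (h ▸ hbS))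
  have eq2 : hfun S = 2 ^ (a + wt E - (len E + 1)) * (Nat.factorial (a + wt E) : ℝ) /
      ((Nat.factorial a : ℝ) * ∏ b ∈ E, (Nat.factorial b : ℝ)) * (Ffun E * ∏ b ∈ E, dd a b) := by
    rw [hSE, hfun_eq]
    rw [show wt (insert a E) = a + wt E from by rw [wt, Finset.sum_insert haE]; rfl]
    rw [show len (insert a E) = len E + 1 from by rw [len, Finset.card_insert_of_notMem haE]; rfl]
    rw [Finset.prod_insert haE, Ffun_insert E a haE]
  have eq1 : hfun (insert (a + 1) E) =
      2 ^ (a + wt E - (len E + 1)) * 2 * ((((a + wt E : ℕ) : ℝ) + 1) * (Nat.factorial (a + wt E) : ℝ)) /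
      ((((a : ℝ) + 1) * (Nat.factorial a : ℝ)) * ∏ b ∈ E, (Nat.factorial b : ℝ)) *
      (Ffun E * ∏ b ∈ E, dd (a + 1) b) := by
    rw [hfun_eq]
    rw [show wt (insert (a + 1) E) = (a + wt E) + 1 from by
      rw [wt, Finset.sum_insert ha1E]; show a + 1 + wt E = _; omega]
    rw [show len (insert (a + 1) E) = len E + 1 from by
      rw [len, Finset.card_insert_of_notMem ha1E]; rfl]
    rw [Finset.prod_insert ha1E, Ffun_insert E (a + 1) ha1E]
    rw [show (a + wt E) + 1 - (len E + 1) = (a + wt E - (len E + 1)) + 1 from by omega]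
    rw [pow_succ, Nat.factorial_succ, Nat.factorial_succ]
    push_cast
    ring
  have hfacE : (∏ b ∈ E, (Nat.factorial b : ℝ)) ≠ 0 :=
    ne_of_gt (Finset.prod_pos (fun b _ => by positivity))
  have hfa : (Nat.factorial a : ℝ) ≠ 0 := by positivity
  have ha1' : ((a : ℝ) + 1) ≠ 0 := by positivity
  calc hfun (insert (a + 1) E) * (cc a * ∏ b ∈ E, (cc a - cc b))
      = (2 ^ (a + wt E - (len E + 1)) * 2 * ((((a + wt E : ℕ) : ℝ) + 1) * (Nat.factorial (a + wt E) : ℝ)) /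
          ((((a : ℝ) + 1) * (Nat.factorial a : ℝ)) * ∏ b ∈ E, (Nat.factorial b : ℝ)) *
          Ffun E * cc a) * ((∏ b ∈ E, dd (a + 1) b) * ∏ b ∈ E, (cc a - cc b)) := by
        rw [eq1]; ring
    _ = (2 ^ (a + wt E - (len E + 1)) * 2 * ((((a + wt E : ℕ) : ℝ) + 1) * (Nat.factorial (a + wt E) : ℝ)) /
          ((((a : ℝ) + 1) * (Nat.factorial a : ℝ)) * ∏ b ∈ E, (Nat.factorial b : ℝ)) *
          Ffun E * cc a) * ((∏ b ∈ E, dd a b) * ∏ b ∈ E, (cc a - cc (b - 1))) := by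
        rw [hprod]
    _ = hfun S * ((wt S : ℝ) + 1) * ∏ b ∈ S, (cc a - cc (b - 1)) := by
        rw [eq2, hN, hw2]
        unfold cc
        push_cast
        field_simp

lemma hfun_step_zero (S : Finset ℕ) (hS : 0 ∉ S) (h1 : 1 ∉ S) :
    hfun (insert 1 S) * (∏ b ∈ S, cc b) = hfun S * ((wt S : ℝ) + 1) * ∏ b ∈ S, cc (b - 1) := by
  have hprod : (∏ b ∈ S, dd 1 b) * (∏ b ∈ S, cc b) = ∏ b ∈ S, cc (b - 1) := by
    rw [← Finset.prod_mul_distrib]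
    apply Finset.prod_congr rfl
    intro b hb
    have hb2 : 2 ≤ b := by
      rcases Nat.lt_or_ge b 2 with h | h
      · interval_cases b
        · exact absurd hb hS
        · exact absurd hb h1
      · exact h
    rw [dd, if_neg (by omega)]
    unfold cc
    have hcb : ((b - 1 : ℕ) : ℝ) = (b : ℝ) - 1 := by push_cast [show 1 ≤ b by omega]; ring
    rw [hcb]
    have hb1 : (b : ℝ) + 1 ≠ 0 := by positivity
    field_simp
    ring
  have eq1 : hfun (insert 1 S) = hfun S * ((wt S : ℝ) + 1) * ∏ b ∈ S, dd 1 b := by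
    rw [hfun_eq, hfun_eq]
    rw [show wt (insert 1 S) = wt S + 1 from by
      rw [wt, Finset.sum_insert h1]; show 1 + wt S = _; omega]
    rw [show len (insert 1 S) = len S + 1 from by
      rw [len, Finset.card_insert_of_notMem h1]; rfl]
    rw [Finset.prod_insert h1, Ffun_insert S 1 h1]
    rw [show wt S + 1 - (len S + 1) = wt S - len S from by omega]
    rw [Nat.factorial_succ]
    simp only [Nat.factorial_one, Nat.cast_one, one_mul]
    push_cast
    ring
  rw [eq1, mul_assoc, hprod]


lemma theta_pos_closed (S : Finset ℕ) (hS : 0 ∉ S) (a : ℕ) (ha : a ∈ S) (ha1 : a + 1 ∉ S) :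
    thetaUp S a = (∏ b ∈ S, (cc a - cc (b - 1))) / (cc a * ∏ b ∈ S.erase a, (cc a - cc b)) := by
  have a0 : a ≠ 0 := fun h => hS (h ▸ ha)
  set g : ℕ → ℝ := fun c => if c = a then 1 else cc a - cc c with hg
  have haX : a ∈ Xset S := mem_Xset.2 (Or.inl ⟨ha, ha1⟩)
  have pX : (∏ x ∈ Xset S, g x) =
      (if 1 ∈ S then 1 else cc a) * ∏ x ∈ ((Xset S).erase 0).erase a, (cc a - cc x) := by
    rw [← Finset.mul_prod_erase _ g haX]
    have hga : g a = 1 := by simp [hg]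
    rw [hga, one_mul]
    rcases em (1 ∈ S) with h1 | h1
    · have h0X : (0:ℕ) ∉ Xset S := by
        rw [mem_Xset]; push_neg
        exact ⟨fun h => absurd h hS, fun _ => h1⟩
      rw [Finset.erase_eq_of_notMem h0X] at *
      rw [if_pos h1, one_mul]
      apply Finset.prod_congr rfl
      intro x hx
      have : x ≠ a := (Finset.mem_erase.1 hx).1
      simp [hg, this]
    · have h0X : (0:ℕ) ∈ (Xset S).erase a := by
        rw [Finset.mem_erase]
        exact ⟨Ne.symm a0, mem_Xset.2 (Or.inr ⟨rfl, h1⟩)⟩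
      rw [← Finset.mul_prod_erase _ g h0X]
      have : g 0 = cc a := by simp [hg, Ne.symm a0, cc_zero]
      rw [this, if_neg h1, Finset.erase_right_comm]
      congr 1
      apply Finset.prod_congr rfl
      intro x hx
      have hx1 : x ≠ a := (Finset.mem_erase.1 hx).1
      simp [hg, hx1]
  have pS : (∏ b ∈ S, g b) = ∏ b ∈ S.erase a, (cc a - cc b) := by
    rw [← Finset.mul_prod_erase _ g ha]
    have : g a = 1 := by simp [hg]
    rw [this, one_mul]
    apply Finset.prod_congr rfl
    intro b hb
    simp [hg, (Finset.mem_erase.1 hb).1]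
  have pb1 : (∏ b ∈ S, g (b - 1)) = ∏ b ∈ S, (cc a - cc (b - 1)) := by
    apply Finset.prod_congr rfl
    intro b hb
    have hb0 : b ≠ 0 := fun h => hS (h ▸ hb)
    have : b - 1 ≠ a := by
      intro h; apply ha1; have : b = a + 1 := by omega
      exact this ▸ hb
    simp [hg, this]
  have pY : (∏ y ∈ Yset S, g y) = ∏ y ∈ Yset S, (cc a - cc y) := by
    apply Finset.prod_congr rfl
    intro y hy
    have : y ≠ a := fun h => ((mem_Yset hS).1 hy).2 (h ▸ ha)
    simp [hg, this]
  have hcca : cc a ≠ 0 := cc_ne_zero a0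
  have hkey := keyA S hS g
  rw [pX, pS, pb1, pY] at hkey
  have hif : (if 1 ∈ S then (1:ℝ) else g 0) = (if 1 ∈ S then 1 else cc a) := by
    split_ifs with h
    · rfl
    · simp [hg, Ne.symm a0, cc_zero]
  rw [hif] at hkey
  have hIne : (if 1 ∈ S then (1:ℝ) else cc a) ≠ 0 := by
    split_ifs <;> simp [hcca]
  rw [mul_assoc, mul_assoc] at hkey
  have hPN := mul_left_cancel₀ hIne hkey
  have hP : (∏ x ∈ ((Xset S).erase 0).erase a, (cc a - cc x)) ≠ 0 := by
    rw [Finset.prod_ne_zero_iff]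
    intro x hx
    have hxa : x ≠ a := (Finset.mem_erase.1 hx).1
    exact cc_sub_ne (Ne.symm hxa)
  have hD : (∏ b ∈ S.erase a, (cc a - cc b)) ≠ 0 := by
    rw [Finset.prod_ne_zero_iff]
    intro b hb
    exact cc_sub_ne (Ne.symm (Finset.mem_erase.1 hb).1)
  rw [thetaUp, if_neg a0, div_eq_div_iff (mul_ne_zero hcca hP) (mul_ne_zero hcca hD)]
  linear_combination (-(cc a)) * hPN

lemma theta_zero_closed (S : Finset ℕ) (hS : 0 ∉ S) (h1 : 1 ∉ S) :
    thetaUp S 0 = (∏ b ∈ S, cc (b - 1)) / (∏ b ∈ S, cc b) := by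
  set g : ℕ → ℝ := fun c => if c = 0 then 1 else cc c with hg
  have h0X : (0:ℕ) ∈ Xset S := mem_Xset.2 (Or.inr ⟨rfl, h1⟩)
  have pX : (∏ x ∈ Xset S, g x) = ∏ x ∈ (Xset S).erase 0, cc x := by
    rw [← Finset.mul_prod_erase _ g h0X]
    have : g 0 = 1 := by simp [hg]
    rw [this, one_mul]
    apply Finset.prod_congr rfl
    intro x hx
    simp [hg, (Finset.mem_erase.1 hx).1]
  have pb1 : (∏ b ∈ S, g (b - 1)) = ∏ b ∈ S, cc (b - 1) := by
    apply Finset.prod_congr rfl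
    intro b hb
    have : b - 1 ≠ 0 := by
      have : b ≠ 0 := fun h => hS (h ▸ hb)
      have : b ≠ 1 := fun h => h1 (h ▸ hb)
      omega
    simp [hg, this]
  have pS : (∏ b ∈ S, g b) = ∏ b ∈ S, cc b := by
    apply Finset.prod_congr rfl
    intro b hb
    have : b ≠ 0 := fun h => hS (h ▸ hb)
    simp [hg, this]
  have pY : (∏ y ∈ Yset S, g y) = ∏ y ∈ Yset S, cc y := by
    apply Finset.prod_congr rfl
    intro y hy
    have : y ≠ 0 := fun h => h1 (by simpa [h] using ((mem_Yset hS).1 hy).1)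
    simp [hg, this]
  have hkey := keyA S hS g
  rw [pX, pS, pb1, pY, if_neg h1] at hkey
  have : g 0 = 1 := by simp [hg]
  rw [this, one_mul] at hkey
  have hP : (∏ x ∈ (Xset S).erase 0, cc x) ≠ 0 := by
    rw [Finset.prod_ne_zero_iff]
    intro x hx
    exact cc_ne_zero (Finset.mem_erase.1 hx).1
  have hD : (∏ b ∈ S, cc b) ≠ 0 := by
    rw [Finset.prod_ne_zero_iff]
    intro b hb
    exact cc_ne_zero (fun h => hS (h ▸ hb))
  rw [thetaUp, if_pos rfl, div_eq_div_iff hP hD]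
  linear_combination -hkey


/-- **Proposition 1.10.** For every strict partition `λ` of weight `n` and every
`x̂ ∈ X(λ)`, the partial fraction coefficient `θ↑_{x̂}(λ)` equals the Plancherel up
transition probability `p∞↑(λ, λ+□(x̂)) = h(λ+□(x̂))/(h(λ)(n+1))` of the Schur graph. -/
theorem thetaUp_eq_plancherel_up (S : Finset ℕ) (hS : IsStrictPartition S)
    (n : ℕ) (hn : wt S = n) (xh : ℕ) (hx : xh ∈ Xset S) :
    thetaUp S xh = hfun (addBox S xh) / (hfun S * ((n : ℝ) + 1)) := by
  have hS' : 0 ∉ S := hS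
  have hpos := hfun_pos S hS'
  subst hn
  have hne : hfun S * ((wt S : ℝ) + 1) ≠ 0 :=
    ne_of_gt (mul_pos hpos (by positivity))
  rcases mem_Xset.1 hx with ⟨haS, ha1⟩ | ⟨rfl, h1⟩
  · have a0 : xh ≠ 0 := fun h => hS' (h ▸ haS)
    rw [theta_pos_closed S hS' xh haS ha1]
    rw [addBox, if_neg a0]
    have hD : (cc xh * ∏ b ∈ S.erase xh, (cc xh - cc b)) ≠ 0 :=
      mul_ne_zero (cc_ne_zero a0) (by
        rw [Finset.prod_ne_zero_iff]
        intro b hb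
        exact cc_sub_ne (Ne.symm (Finset.mem_erase.1 hb).1))
    rw [div_eq_div_iff hD hne]
    linear_combination - hfun_step_pos S hS' xh haS ha1
  · rw [theta_zero_closed S hS' h1, addBox, if_pos rfl]
    have hD : (∏ b ∈ S, cc b) ≠ 0 := by
      rw [Finset.prod_ne_zero_iff]
      intro b hb
      exact cc_ne_zero (fun h => hS' (h ▸ hb))
    rw [div_eq_div_iff hD hne]
    linear_combination - hfun_step_zero S hS' h1
end

section
/- For every α ∈ (0, ∞), every strict partition λ of weight n, and every x ∈ X(λ), setting ν = λ+□(x), the up transition function of the multiplicative coherent system satisfies the explicit formula: (M_{n+1}^α(ν) / M_n^α(λ)) · p↓(ν, λ) = ((x(x+1)+α)/(2n+α)) · h(ν)/(h(λ)·(n+1)). -/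
open Finset

lemma hfun_ne_zero (S : Finset ℕ) : hfun S ≠ 0 := by
  unfold hfun
  apply mul_ne_zero
  · apply div_ne_zero
    · positivity
    · apply Finset.prod_ne_zero_iff.mpr
      intro a _
      exact_mod_cast (Nat.factorial_pos a).ne'
  · apply Finset.prod_ne_zero_iff.mpr
    intro p hp
    simp only [Finset.mem_filter, Finset.mem_offDiag] at hp
    obtain ⟨⟨-, -, -⟩, hlt⟩ := hp
    have hlt' : (p.2 : ℝ) < p.1 := by exact_mod_cast hlt
    have h0 : (0:ℝ) ≤ p.2 := Nat.cast_nonneg _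
    apply div_ne_zero <;> intro h <;> nlinarith

lemma Zfun_pos (α : ℝ) (hα : 0 < α) (n : ℕ) : 0 < Zfun α n := by
  apply Finset.prod_pos
  intro k _
  have : (0:ℝ) ≤ (k:ℝ) := Nat.cast_nonneg _
  linarith

lemma prodP_pos (α : ℝ) (hα : 0 < α) (S : Finset ℕ) :
    0 < ∏ p ∈ S, ∏ c ∈ Finset.range p, (cc c + α) := by
  apply Finset.prod_pos
  intro p _
  apply Finset.prod_pos
  intro c _
  have : (0:ℝ) ≤ cc c := by unfold cc; positivity
  linarith


/-- **The explicit formula (7) for the up transition function of the multiplicative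
coherent system.** For `α ∈ (0,∞)`, a strict partition `λ` of weight `n` and `x ∈ X(λ)`,
with `ν = λ+□(x)`:
`p_α↑(λ,ν) = (M_{n+1}^α(ν)/M_n^α(λ)) ⬝ p↓(ν,λ)
           = ((x(x+1)+α)/(2n+α)) ⬝ h(ν)/(h(λ)(n+1))`,
where `p↓(ν,λ) = (h(λ)/h(ν)) κ(λ,ν)` with `κ(λ,ν) = 2` if `ℓ(ν)=ℓ(λ)` and `1` otherwise. -/
theorem multiplicative_up_transition (α : ℝ) (hα : 0 < α)
    (S : Finset ℕ) (hS : IsStrictPartition S) (n : ℕ) (hn : wt S = n)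
    (x : ℕ) (hx : x ∈ Xset S) :
    (Mw α (n + 1) (addBox S x) / Mw α n S) *
        ((hfun S / hfun (addBox S x)) *
          (if len (addBox S x) = len S then (2 : ℝ) else 1)) =
      ((cc x + α) / (2 * (n : ℝ) + α)) * (hfun (addBox S x) / (hfun S * ((n : ℝ) + 1))) := by
  have hhS := hfun_ne_zero S
  have hhn := hfun_ne_zero (addBox S x)
  have hZ : Zfun α n ≠ 0 := (Zfun_pos α hα n).ne'
  have hP : (∏ p ∈ S, ∏ c ∈ Finset.range p, (cc c + α)) ≠ 0 := (prodP_pos α hα S).ne'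
  have hF : (Nat.factorial n : ℝ) ≠ 0 := by exact_mod_cast (Nat.factorial_pos n).ne'
  have hZsucc : Zfun α (n+1) = Zfun α n * (α + 2*n) := by
    simp [Zfun, Finset.prod_range_succ]
  have hFsucc : (Nat.factorial (n+1) : ℝ) = ((n:ℝ)+1) * (Nat.factorial n : ℝ) := by
    rw [Nat.factorial_succ]; push_cast; ring
  have hα2n : α + 2*(n:ℝ) ≠ 0 := by positivity
  have hn1 : (n:ℝ) + 1 ≠ 0 := by positivity
  by_cases hx0 : x = 0
  · subst hx0
    have h1S : 1 ∉ S := by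
      by_contra h1
      simp only [Xset, h1, if_neg, Finset.mem_union, Finset.mem_filter,
        not_true, if_false, Finset.union_empty] at hx
      exact hS hx.1
    have hν : addBox S 0 = insert 1 S := by simp [addBox]
    have hlen : len (addBox S 0) = len S + 1 := by
      rw [hν, len, len, Finset.card_insert_of_notMem h1S]
    have hPν : (∏ p ∈ addBox S 0, ∏ c ∈ Finset.range p, (cc c + α))
        = (cc 0 + α) * ∏ p ∈ S, ∏ c ∈ Finset.range p, (cc c + α) := by
      rw [hν, Finset.prod_insert h1S]
      simp [cc]
    have hif : (if len (addBox S 0) = len S then (2:ℝ) else 1) = 1 := by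
      rw [hlen]; simp
    rw [hif]
    unfold Mw
    rw [hPν, hZsucc, hlen, hFsucc]
    have hcc0 : cc 0 + α ≠ 0 := by simp [cc]; positivity
    field_simp
    ring
  · have hxS : x ∈ S ∧ x + 1 ∉ S := by
      rcases Finset.mem_union.mp hx with h | h
      · exact Finset.mem_filter.mp h
      · exfalso
        split at h
        · exact hx0 (Finset.mem_singleton.mp h)
        · exact absurd h (Finset.notMem_empty x)
    obtain ⟨hxmem, hx1⟩ := hxS
    have hx1e : x + 1 ∉ S.erase x := fun h => hx1 (Finset.mem_of_mem_erase h)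
    have hν : addBox S x = insert (x+1) (S.erase x) := by simp [addBox, hx0]
    have hlen : len (addBox S x) = len S := by
      rw [hν, len, len, Finset.card_insert_of_notMem hx1e,
        Finset.card_erase_of_mem hxmem]
      have : 1 ≤ S.card := Finset.card_pos.mpr ⟨x, hxmem⟩
      omega
    have hPν : (∏ p ∈ addBox S x, ∏ c ∈ Finset.range p, (cc c + α))
        = (cc x + α) * ∏ p ∈ S, ∏ c ∈ Finset.range p, (cc c + α) := by
      rw [hν, Finset.prod_insert hx1e, Finset.prod_range_succ,
        ← Finset.prod_erase_mul S _ hxmem]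
      ring
    have hif : (if len (addBox S x) = len S then (2:ℝ) else 1) = 2 := by
      rw [hlen]; simp
    rw [hif]
    unfold Mw
    rw [hPν, hZsucc, hlen, hFsucc]
    have hccx : cc x + α ≠ 0 := by
      have : (0:ℝ) ≤ cc x := by unfold cc; positivity
      linarith
    field_simp
    ring
end

section
/- For every strict partition λ = (λ_1 > ⋯ > λ_ℓ > 0), the following identity of polynomials in one variable v holds: ∏_{i=1}^{ℓ} (v − λ_i(λ_i−1)) · ∏_{x ∈ X'(λ)} (v − x(x+1)) = ∏_{i=1}^{ℓ} (v − λ_i(λ_i+1)) · ∏_{y ∈ Y(λ)} (v − y(y+1)). Equivalently, the rational function Φ(v;λ) = ∏_i (v − λ_i(λ_i−1))/(v − λ_i(λ_i+1)) equals ∏_{y∈Y(λ)}(v − y(y+1)) / ∏_{x∈X'(λ)}(v − x(x+1)). -/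
open Finset

/-- **Proposition 3.6.** For every strict partition `λ`, as polynomials in `v`:
`∏_i (v − λ_i(λ_i−1)) ⬝ ∏_{x∈X'(λ)} (v − x(x+1))
  = ∏_i (v − λ_i(λ_i+1)) ⬝ ∏_{y∈Y(λ)} (v − y(y+1))`,
i.e. `Φ(v;λ) = ∏_{y∈Y(λ)}(v−y(y+1)) / ∏_{x∈X'(λ)}(v−x(x+1))`. -/
theorem phi_factorization (S : Finset ℕ) (hS : IsStrictPartition S) (v : ℝ) :
    (∏ a ∈ S, (v - (a : ℝ) * ((a : ℝ) - 1))) * (∏ x ∈ (Xset S).erase 0, (v - cc x)) =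
      (∏ a ∈ S, (v - cc a)) * (∏ y ∈ Yset S, (v - cc y)) := by
  have h0 : ∀ a ∈ S, a ≠ 0 := fun a ha h => hS (h ▸ ha)
  -- characterize X' and Y
  have hX' : (Xset S).erase 0 = S.filter (fun x => x + 1 ∉ S) := by
    ext x
    simp only [Xset, Finset.mem_erase, Finset.mem_union, Finset.mem_filter]
    constructor
    · rintro ⟨hx0, h | h⟩
      · exact h
      · exfalso; split at h <;> simp_all
    · intro ⟨hx, h⟩
      exact ⟨h0 x hx, Or.inl ⟨hx, h⟩⟩
  have hY : ∀ x, x ∈ Yset S ↔ (x + 1 ∈ S ∧ x ∉ S) := by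
    intro x
    simp only [Yset, Finset.mem_image, Finset.mem_filter]
    constructor
    · rintro ⟨p, ⟨hp, hp1⟩, rfl⟩
      have : p ≠ 0 := h0 p hp
      have : p - 1 + 1 = p := by omega
      constructor
      · rwa [this]
      · exact hp1
    · rintro ⟨h1, h2⟩
      exact ⟨x + 1, ⟨h1, by simpa using h2⟩, by simp⟩
  have hS' : ∀ x, x ∈ S.image (· - 1) ↔ x + 1 ∈ S := by
    intro x
    simp only [Finset.mem_image]
    constructor
    · rintro ⟨a, ha, rfl⟩
      have := h0 a ha
      have : a - 1 + 1 = a := by omega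
      rwa [this]
    · intro h; exact ⟨x + 1, h, by simp⟩
  -- first product rewrite
  have h1 : (∏ a ∈ S, (v - (a : ℝ) * ((a : ℝ) - 1))) = ∏ x ∈ S.image (· - 1), (v - cc x) := by
    rw [Finset.prod_image]
    · apply Finset.prod_congr rfl
      intro a ha
      have ha0 : a ≠ 0 := h0 a ha
      have h1a : 1 ≤ a := Nat.one_le_iff_ne_zero.mpr ha0
      have hc : ((a - 1 : ℕ) : ℝ) = (a : ℝ) - 1 := by
        push_cast [h1a]; ring
      have hc2 : ((a - 1 : ℕ) : ℝ) + 1 = (a : ℝ) := by rw [hc]; ring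
      simp only [cc, hc, hc2]
      ring
    · intro a ha b hb hab
      simp only at hab
      have := h0 a ha; have := h0 b hb; omega
  rw [h1, hX']
  -- disjointness
  have hd1 : Disjoint (S.image (· - 1)) (S.filter (fun x => x + 1 ∉ S)) := by
    rw [Finset.disjoint_left]
    intro x hx hx2
    rw [hS'] at hx
    exact (Finset.mem_filter.mp hx2).2 hx
  have hd2 : Disjoint S (Yset S) := by
    rw [Finset.disjoint_left]
    intro x hx hx2
    exact ((hY x).mp hx2).2 hx
  rw [← Finset.prod_union hd1, ← Finset.prod_union hd2]
  apply Finset.prod_congr _ (fun _ _ => rfl)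
  ext x
  simp only [Finset.mem_union, Finset.mem_filter, hS' x, hY x]
  by_cases hx : x ∈ S <;> by_cases hx1 : x + 1 ∈ S <;> simp [hx, hx1]
end

section
/- Let λ = (λ_1 > ⋯ > λ_ℓ > 0) be a strict partition, let x ∈ X(λ), and let μ = λ+□(x), of length ℓ'. Then the following identity of polynomials in one variable v holds: ∏_{i=1}^{ℓ'} (v − μ_i(μ_i−1)) · ∏_{i=1}^{ℓ} (v − λ_i(λ_i+1)) · ((v − x(x+1))² − 2(v + x(x+1))) = ∏_{i=1}^{ℓ'} (v − μ_i(μ_i+1)) · ∏_{i=1}^{ℓ} (v − λ_i(λ_i−1)) · (v − x(x+1))². Equivalently, for Φ(v;λ) = ∏_i (v − λ_i(λ_i−1))/(v − λ_i(λ_i+1)) one has Φ(v; λ+□(x))/Φ(v;λ) = (v − x(x+1))² / ((v − x(x+1))² − 2(v + x(x+1))); by symmetry, for y ∈ Y(λ), Φ(v; λ−□(y))/Φ(v;λ) = ((v − y(y+1))² − 2(v + y(y+1))) / (v − y(y+1))². -/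
open Finset

/-- **Lemma 3.8.** For a strict partition `λ`, `x ∈ X(λ)` and `y ∈ Y(λ)`, as polynomial
identities in `v` (with `Φ(v;λ) = ∏_i (v − λ_i(λ_i−1))/(v − λ_i(λ_i+1))`):
`Φ(v;λ+□(x))/Φ(v;λ) = (v−x(x+1))² / ((v−x(x+1))² − 2(v+x(x+1)))` and
`Φ(v;λ−□(y))/Φ(v;λ) = ((v−y(y+1))² − 2(v+y(y+1))) / (v−y(y+1))²`,
stated in cross-multiplied (polynomial) form. -/
theorem phi_ratio (S : Finset ℕ) (hS : IsStrictPartition S) (v : ℝ) :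
    (∀ x ∈ Xset S,
      (∏ a ∈ addBox S x, (v - (a : ℝ) * ((a : ℝ) - 1))) * (∏ a ∈ S, (v - cc a)) *
          ((v - cc x) ^ 2 - 2 * (v + cc x)) =
        (∏ a ∈ addBox S x, (v - cc a)) * (∏ a ∈ S, (v - (a : ℝ) * ((a : ℝ) - 1))) *
          (v - cc x) ^ 2) ∧
    (∀ y ∈ Yset S,
      (∏ a ∈ removeBox S y, (v - (a : ℝ) * ((a : ℝ) - 1))) * (∏ a ∈ S, (v - cc a)) *
          (v - cc y) ^ 2 =
        (∏ a ∈ removeBox S y, (v - cc a)) * (∏ a ∈ S, (v - (a : ℝ) * ((a : ℝ) - 1))) *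
          ((v - cc y) ^ 2 - 2 * (v + cc y))) := by
  constructor
  · intro x hx
    simp only [Xset, Finset.mem_union, Finset.mem_filter] at hx
    rcases hx with ⟨hxS, hx1⟩ | hx0
    · have hxne : x ≠ 0 := fun h => hS (h ▸ hxS)
      have h1 : x + 1 ∉ S.erase x := fun h => hx1 (Finset.mem_of_mem_erase h)
      rw [addBox, if_neg hxne, Finset.prod_insert h1, Finset.prod_insert h1,
        ← Finset.mul_prod_erase S (fun a => v - (a : ℝ) * ((a : ℝ) - 1)) hxS,
        ← Finset.mul_prod_erase S (fun a => v - cc a) hxS]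
      simp only [cc]
      push_cast
      ring
    · by_cases h1 : (1 : ℕ) ∈ S
      · simp [h1] at hx0
      · simp [h1] at hx0
        subst hx0
        rw [addBox, if_pos rfl, Finset.prod_insert h1, Finset.prod_insert h1]
        simp only [cc]
        push_cast
        ring
  · intro y hy
    simp only [Yset, Finset.mem_image, Finset.mem_filter] at hy
    obtain ⟨p, ⟨hpS, hp1⟩, hpy⟩ := hy
    have hp0 : p ≠ 0 := fun h => hS (h ▸ hpS)
    have hp : p = y + 1 := by omega
    subst hp
    simp only [Nat.add_sub_cancel] at hp1
    by_cases hy0 : y = 0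
    · subst hy0
      rw [removeBox, if_pos rfl,
        ← Finset.mul_prod_erase S (fun a => v - (a : ℝ) * ((a : ℝ) - 1)) hpS,
        ← Finset.mul_prod_erase S (fun a => v - cc a) hpS]
      simp only [cc]
      push_cast
      ring
    · have hye : y ∉ S.erase (y + 1) := fun h => hp1 (Finset.mem_of_mem_erase h)
      rw [removeBox, if_neg hy0, Finset.prod_insert hye, Finset.prod_insert hye,
        ← Finset.mul_prod_erase S (fun a => v - (a : ℝ) * ((a : ℝ) - 1)) hpS,
        ← Finset.mul_prod_erase S (fun a => v - cc a) hpS]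
      simp only [cc]
      push_cast
      ring
end

section
/- In the ring (ℝ[ξ])[[t]] of formal power series in t with polynomial coefficients in ξ, define B(t) = ((1−ξt)² − 2t(1+ξt)) · ((1−ξt)²)^{−1} (the series (1−ξt)² has constant term 1 and hence is invertible), and let A(t) = B(t)^{−1} (B(t) has constant term 1). Write B(t) = Σ_{s≥0} b_s(ξ) t^s and A(t) = Σ_{s≥0} a_s(ξ) t^s with a_s, b_s ∈ ℝ[ξ]. Then a_0(ξ) = b_0(ξ) = 1; for every s ≥ 1, b_s(ξ) = −2(2s−1) ξ^{s−1}; and for every s ≥ 1, a_s(ξ) has degree s−1 in ξ with leading coefficient 2(2s−1), i.e. a_s(ξ) − 2(2s−1)ξ^{s−1} has degree at most s−2. -/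
open PowerSeries

private lemma aux_B (B : PowerSeries (Polynomial ℝ))
    (hB : B * (1 - PowerSeries.C Polynomial.X * PowerSeries.X) ^ 2 =
      (1 - PowerSeries.C Polynomial.X * PowerSeries.X) ^ 2 -
        2 * PowerSeries.X * (1 + PowerSeries.C Polynomial.X * PowerSeries.X)) :
    PowerSeries.coeff 0 B = 1 ∧
    ∀ m : ℕ, PowerSeries.coeff (m+1) B
      = Polynomial.C (-(4*(m:ℝ)+2)) * Polynomial.X ^ m := by
  have hB2 : B = 1 + PowerSeries.C (-(2*Polynomial.X+2)) * PowerSeries.X ^ 1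
      + PowerSeries.C (Polynomial.X^2 - 2*Polynomial.X) * PowerSeries.X ^ 2
      + PowerSeries.C (2*Polynomial.X) * (B * PowerSeries.X ^ 1)
      + PowerSeries.C (-(Polynomial.X^2)) * (B * PowerSeries.X ^ 2) := by
    simp only [map_add, map_sub, map_mul, map_neg, map_pow, map_ofNat]
    linear_combination hB
  have h0 := congrArg (PowerSeries.coeff 0) hB2
  have h1 := congrArg (PowerSeries.coeff 1) hB2
  have h2 := congrArg (PowerSeries.coeff 2) hB2
  simp only [map_add, PowerSeries.coeff_C_mul, PowerSeries.coeff_mul_X_pow',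
    PowerSeries.coeff_C_mul_X_pow, PowerSeries.coeff_one] at h0 h1 h2
  norm_num at h0 h1 h2
  rw [h0, mul_one] at h1
  rw [h0, mul_one, h1] at h2
  have h3 : ∀ m : ℕ, PowerSeries.coeff (m+3) B
      = 2*Polynomial.X * PowerSeries.coeff (m+2) B
        - Polynomial.X^2 * PowerSeries.coeff (m+1) B := by
    intro m
    have h := congrArg (PowerSeries.coeff (m+3)) hB2
    simp only [map_add, PowerSeries.coeff_C_mul, PowerSeries.coeff_mul_X_pow',
      PowerSeries.coeff_C_mul_X_pow, PowerSeries.coeff_one] at h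
    norm_num [← map_pow, PowerSeries.coeff_C, show m+3-1 = m+2 by omega,
      show m+3-2 = m+1 by omega, show ¬(m+3 = 0) by omega, show ¬(m+3=1) by omega,
      show ¬(m+3=2) by omega] at h
    linear_combination h
  rw [PowerSeries.coeff_zero_eq_constantCoeff]
  refine ⟨h0, ?_⟩
  intro m
  induction m using Nat.strong_induction_on with
  | _ m ih =>
    match m with
    | 0 =>
      have e : (-(4*((0:ℕ):ℝ)+2)) = -2 := by norm_num
      rw [h1, e, map_neg, map_ofNat]; ring
    | 1 =>
      have e : (-(4*((1:ℕ):ℝ)+2)) = -6 := by norm_num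
      rw [h2, e, map_neg, map_ofNat]; ring
    | (k+2) =>
      rw [show k+2+1 = k+3 by ring, h3 k, ih (k+1) (by omega), ih k (by omega)]
      have e1 : (-(4*((k:ℝ)+2)+2)) = 2*(-(4*(k+1)+2)) - (-(4*k+2)) := by ring
      push_cast
      rw [e1, map_sub, map_mul, map_ofNat]
      ring

private lemma aux_A (A B : PowerSeries (Polynomial ℝ))
    (hA : A * B = 1)
    (hb0 : PowerSeries.coeff 0 B = 1)
    (hb : ∀ m : ℕ, PowerSeries.coeff (m+1) B
      = Polynomial.C (-(4*(m:ℝ)+2)) * Polynomial.X ^ m) :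
    PowerSeries.coeff 0 A = 1 ∧
    ∀ m : ℕ, Polynomial.degree (PowerSeries.coeff (m+1) A
        - Polynomial.C ((4*(m:ℝ)+2)) * Polynomial.X ^ m) < (m : WithBot ℕ) := by
  have ha0 : PowerSeries.coeff 0 A = 1 := by
    have h := congrArg (PowerSeries.coeff 0) hA
    simp only [PowerSeries.coeff_zero_eq_constantCoeff, map_mul, map_one] at h hb0 ⊢
    rw [hb0, mul_one] at h
    exact h
  refine ⟨ha0, ?_⟩
  have hsum : ∀ m : ℕ, ∑ k ∈ Finset.range (m+2),
      PowerSeries.coeff k A * PowerSeries.coeff (m+1-k) B = 0 := by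
    intro m
    have h := congrArg (PowerSeries.coeff (m+1)) hA
    rw [PowerSeries.coeff_mul, Finset.Nat.sum_antidiagonal_eq_sum_range_succ_mk] at h
    simpa [PowerSeries.coeff_one] using h
  intro m
  induction m using Nat.strong_induction_on with
  | _ m ih =>
    -- degree bounds from IH
    have hdeg : ∀ k < m, Polynomial.degree (PowerSeries.coeff (k+1) A)
        ≤ (k : WithBot ℕ) := by
      intro k hk
      have h1 := le_of_lt (ih k hk)
      have h2 : Polynomial.degree (Polynomial.C ((4*(k:ℝ)+2)) * Polynomial.X ^ k)
          ≤ (k : WithBot ℕ) := Polynomial.degree_C_mul_X_pow_le k _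
      calc Polynomial.degree (PowerSeries.coeff (k+1) A)
          = Polynomial.degree ((PowerSeries.coeff (k+1) A
              - Polynomial.C ((4*(k:ℝ)+2)) * Polynomial.X ^ k)
              + Polynomial.C ((4*(k:ℝ)+2)) * Polynomial.X ^ k) := by rw [sub_add_cancel]
        _ ≤ _ := le_trans (Polynomial.degree_add_le _ _) (max_le h1 h2)
    -- the key identity
    have hid : PowerSeries.coeff (m+1) A
        - Polynomial.C ((4*(m:ℝ)+2)) * Polynomial.X ^ m
        = -∑ k ∈ Finset.range m,
            PowerSeries.coeff (k+1) A * PowerSeries.coeff (m-k) B := by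
      have h := hsum m
      rw [Finset.sum_range_succ, Finset.sum_range_succ'] at h
      simp only [Nat.succ_sub_succ, Nat.add_sub_cancel_left, Nat.sub_self, Nat.sub_zero] at h
      rw [ha0, hb0, hb m, one_mul, mul_one, map_neg] at h
      linear_combination h
    rw [hid, Polynomial.degree_neg]
    refine lt_of_le_of_lt (Polynomial.degree_sum_le _ _) ?_
    rw [Finset.sup_lt_iff (by exact_mod_cast WithBot.bot_lt_coe m)]
    intro k hk
    rw [Finset.mem_range] at hk
    obtain ⟨j, hj1, hj2⟩ : ∃ j, m - k = j + 1 ∧ k + j + 1 = m := ⟨m-k-1, by omega, by omega⟩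
    rw [hj1, hb j]
    refine lt_of_le_of_lt (Polynomial.degree_mul_le _ _) ?_
    have hA' := hdeg k (by omega)
    have hB' : Polynomial.degree (Polynomial.C (-(4*(j:ℝ)+2)) * Polynomial.X ^ j)
        ≤ (j : WithBot ℕ) := Polynomial.degree_C_mul_X_pow_le j _
    calc Polynomial.degree (PowerSeries.coeff (k+1) A)
          + Polynomial.degree (Polynomial.C (-(4*(j:ℝ)+2)) * Polynomial.X ^ j)
        ≤ (k : WithBot ℕ) + (j : WithBot ℕ) := add_le_add hA' hB'
      _ = ((k+j : ℕ) : WithBot ℕ) := by rw [Nat.cast_add]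
      _ < (m : WithBot ℕ) := by exact_mod_cast (by omega : k + j < m)

/-- **Lemma 4.5.** In `(ℝ[ξ])[[t]]`, let `B(t)` be the power series with
`B(t) ⬝ (1−ξt)² = (1−ξt)² − 2t(1+ξt)` (i.e. `B(t) = ((1−ξt)² − 2t(1+ξt))/(1−ξt)²`),
and let `A(t) = B(t)⁻¹` (i.e. `A(t) B(t) = 1`). Writing `A(t) = ∑ a_s(ξ) t^s`,
`B(t) = ∑ b_s(ξ) t^s`, we have `a_0 = b_0 = 1`; `b_s(ξ) = −2(2s−1) ξ^{s−1}` for `s ≥ 1`;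
and for `s ≥ 1`, `a_s(ξ) − 2(2s−1)ξ^{s−1}` has degree at most `s−2`
(so `a_s` has degree `s−1` with leading coefficient `2(2s−1)`). -/
theorem expansion_coefficients (A B : PowerSeries (Polynomial ℝ))
    (hB : B * (1 - PowerSeries.C Polynomial.X * PowerSeries.X) ^ 2 =
      (1 - PowerSeries.C Polynomial.X * PowerSeries.X) ^ 2 -
        2 * PowerSeries.X * (1 + PowerSeries.C Polynomial.X * PowerSeries.X))
    (hA : A * B = 1) :
    PowerSeries.coeff 0 A = 1 ∧
    PowerSeries.coeff 0 B = 1 ∧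
    (∀ s : ℕ, 1 ≤ s →
      PowerSeries.coeff s B =
        Polynomial.C (-2 * (2 * (s : ℝ) - 1)) * Polynomial.X ^ (s - 1)) ∧
    (∀ s : ℕ, 1 ≤ s →
      Polynomial.degree
          (PowerSeries.coeff s A -
            Polynomial.C (2 * (2 * (s : ℝ) - 1)) * Polynomial.X ^ (s - 1)) <
        ((s - 1 : ℕ) : WithBot ℕ)) := by
  obtain ⟨hb0, hb⟩ := aux_B B hB
  obtain ⟨ha0, ha⟩ := aux_A A B hA hb0 hb
  refine ⟨ha0, hb0, ?_, ?_⟩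
  · intro s hs
    obtain ⟨m, rfl⟩ : ∃ m, s = m + 1 := ⟨s - 1, by omega⟩
    have e : (-2 * (2 * (((m+1 : ℕ)) : ℝ) - 1)) = -(4*(m:ℝ)+2) := by push_cast; ring
    rw [e, Nat.add_sub_cancel]
    exact hb m
  · intro s hs
    obtain ⟨m, rfl⟩ : ∃ m, s = m + 1 := ⟨s - 1, by omega⟩
    have e : (2 * (2 * (((m+1 : ℕ)) : ℝ) - 1)) = (4*(m:ℝ)+2) := by push_cast; ring
    rw [e, Nat.add_sub_cancel]
    exact ha m
end

section
/- The moment coordinates separate the points of Ω₊, and so does any infinite subcollection of them: if x, y ∈ Ω₊ and the set of integers k ≥ 2 such that Σ_{i=1}^∞ x_i^k = Σ_{i=1}^∞ y_i^k is infinite, then x = y. In particular, the even moment coordinates q_{2k}(x) = Σ_i x_i^{2k+1}, k = 1, 2, …, separate the points of Ω₊. -/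
private lemma summable_pow_aux {x : ℕ → ℝ} (hx0 : ∀ i, 0 ≤ x i) (hx1 : ∀ i, x i ≤ 1)
    (hs : Summable x) {k : ℕ} (hk : k ≠ 0) : Summable (fun i => x i ^ k) :=
  hs.of_nonneg_of_le (fun i => pow_nonneg (hx0 i) k)
    (fun i => pow_le_of_le_one (hx0 i) (hx1 i) hk)

private lemma tail_lemma (x y : ℕ → ℝ)
    (hx0 : ∀ i, 0 ≤ x i) (hxle1 : ∀ i, x i ≤ 1) (hxant : Antitone x) (hxs : Summable x)
    (hxs1 : ∑' i, x i ≤ 1)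
    (hy0 : ∀ i, 0 ≤ y i) (hyle1 : ∀ i, y i ≤ 1) (hyant : Antitone y) (hys : Summable y)
    (hys1 : ∑' i, y i ≤ 1)
    (hinf : {k : ℕ | 2 ≤ k ∧ ∑' i, x i ^ k = ∑' i, y i ^ k}.Infinite)
    (i : ℕ) (hpre : ∀ j < i, x j = y j) (hlt : y i < x i) : False := by
  set a := x i with ha
  set b := y i with hb
  have ha0 : 0 < a := lt_of_le_of_lt (hy0 i) hlt
  have hb0 : 0 ≤ b := hy0 i
  -- eventually b^(k-1) < a^k
  have hev : ∃ K : ℕ, ∀ k ≥ K, 2 ≤ k → b ^ (k - 1) < a ^ k := by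
    rcases eq_or_lt_of_le hb0 with hbz | hbp
    · exact ⟨2, fun k hk hk2 => by
        rw [← hbz, zero_pow (by omega)]
        exact pow_pos ha0 k⟩
    · have hdiv : 1 < a / b := (one_lt_div hbp).2 hlt
      have := (tendsto_pow_atTop_atTop_of_one_lt hdiv).eventually_gt_atTop (1 / a)
      rcases (Filter.eventually_atTop).1 this with ⟨N, hN⟩
      refine ⟨N + 2, fun k hk hk2 => ?_⟩
      have h1 : 1 / a < (a / b) ^ (k - 1) := hN (k - 1) (by omega)
      rw [div_pow, div_lt_div_iff₀ ha0 (pow_pos hbp _)] at h1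
      have : a ^ k = a ^ (k - 1) * a := by
        rw [← pow_succ]; congr 1; omega
      nlinarith [pow_pos hbp (k - 1)]
  rcases hev with ⟨K, hK⟩
  rcases hinf.exists_gt (K + 2) with ⟨k, hkS, hkgt⟩
  obtain ⟨hk2, heq⟩ := hkS
  have hkne : k ≠ 0 := by omega
  have hxpk : Summable (fun j => x j ^ k) := summable_pow_aux hx0 hxle1 hxs hkne
  have hypk : Summable (fun j => y j ^ k) := summable_pow_aux hy0 hyle1 hys hkne
  -- tails are equal
  have hxsplit := Summable.sum_add_tsum_nat_add i hxpk
  have hysplit := Summable.sum_add_tsum_nat_add i hypk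
  have hpresum : ∑ j ∈ Finset.range i, x j ^ k = ∑ j ∈ Finset.range i, y j ^ k :=
    Finset.sum_congr rfl (fun j hj => by rw [hpre j (Finset.mem_range.1 hj)])
  have htail : ∑' j, x (j + i) ^ k = ∑' j, y (j + i) ^ k := by
    have := heq
    rw [← hxsplit, ← hysplit, hpresum] at this
    linarith
  -- lower bound for x tail
  have hlo : a ^ k ≤ ∑' j, x (j + i) ^ k := by
    have := Summable.le_tsum (f := fun j => x (j + i) ^ k) (hxpk.comp_injective (add_left_injective i)) 0
      (fun j _ => pow_nonneg (hx0 _) k)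
    simpa using this
  -- upper bound for y tail
  have hytails : Summable (fun j => y (j + i)) := hys.comp_injective (add_left_injective i)
  have hytail1 : ∑' j, y (j + i) ≤ 1 := by
    have hsplit := Summable.sum_add_tsum_nat_add i hys
    have hnn : 0 ≤ ∑ j ∈ Finset.range i, y j := Finset.sum_nonneg (fun j _ => hy0 j)
    linarith
  have hhi : ∑' j, y (j + i) ^ k ≤ b ^ (k - 1) := by
    have h1 : ∑' j, y (j + i) ^ k ≤ ∑' j, b ^ (k - 1) * y (j + i) := by
      apply Summable.tsum_le_tsum _ (hypk.comp_injective (add_left_injective i)) (hytails.mul_left _)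
      intro j
      have hle : y (j + i) ≤ b := hyant (by omega)
      calc y (j + i) ^ k = y (j + i) ^ (k - 1) * y (j + i) := by
            rw [← pow_succ]; congr 1; omega
        _ ≤ b ^ (k - 1) * y (j + i) :=
            mul_le_mul_of_nonneg_right (pow_le_pow_left₀ (hy0 _) hle _) (hy0 _)
    rw [tsum_mul_left] at h1
    calc ∑' j, y (j + i) ^ k ≤ b ^ (k - 1) * ∑' j, y (j + i) := h1
      _ ≤ b ^ (k - 1) * 1 := mul_le_mul_of_nonneg_left hytail1 (pow_nonneg hb0 _)
      _ = b ^ (k - 1) := mul_one _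
  have := hK k (by omega) hk2
  linarith [htail ▸ hlo]

/-- **Proposition 6.6.** The moment coordinates `q_k(x) = ∑_i x_i^{k+1}` separate the
points of `Ω₊`, and so does any infinite subcollection of them: if `x, y ∈ Ω₊` and
`∑_i x_i^k = ∑_i y_i^k` for infinitely many integers `k ≥ 2`, then `x = y`.
(In particular the even moment coordinates `q_{2k}` separate the points of `Ω₊`.) -/
theorem moment_coordinates_separate (x y : ℕ → ℝ)
    (hx0 : ∀ i, 0 ≤ x i) (hx1 : x 0 ≤ 1) (hxmono : ∀ i, x (i + 1) ≤ x i)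
    (hxsum : ∃ s ≤ (1 : ℝ), HasSum x s)
    (hy0 : ∀ i, 0 ≤ y i) (hy1 : y 0 ≤ 1) (hymono : ∀ i, y (i + 1) ≤ y i)
    (hysum : ∃ s ≤ (1 : ℝ), HasSum y s)
    (hinf : {k : ℕ | 2 ≤ k ∧ ∑' i, x i ^ k = ∑' i, y i ^ k}.Infinite) :
    x = y := by
  obtain ⟨sx, hsx1, hsx⟩ := hxsum
  obtain ⟨sy, hsy1, hsy⟩ := hysum
  have hxant : Antitone x := antitone_nat_of_succ_le hxmono
  have hyant : Antitone y := antitone_nat_of_succ_le hymono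
  have hxle1 : ∀ i, x i ≤ 1 := fun i => le_trans (hxant (Nat.zero_le i)) hx1
  have hyle1 : ∀ i, y i ≤ 1 := fun i => le_trans (hyant (Nat.zero_le i)) hy1
  have hxs : Summable x := hsx.summable
  have hys : Summable y := hsy.summable
  have hxs1 : ∑' i, x i ≤ 1 := by rw [hsx.tsum_eq]; exact hsx1
  have hys1 : ∑' i, y i ≤ 1 := by rw [hsy.tsum_eq]; exact hsy1
  have hinf' : {k : ℕ | 2 ≤ k ∧ ∑' i, y i ^ k = ∑' i, x i ^ k}.Infinite := by
    convert hinf using 2 with k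
    simp [eq_comm]
  funext i
  induction i using Nat.strong_induction_on with
  | _ i IH =>
    by_contra hne
    rcases lt_or_gt_of_ne hne with h | h
    · exact tail_lemma y x hy0 hyle1 hyant hys hys1 hx0 hxle1 hxant hxs hxs1 hinf' i
        (fun j hj => (IH j hj).symm) h
    · exact tail_lemma x y hx0 hxle1 hxant hxs hxs1 hy0 hyle1 hyant hys hys1 hinf i
        (fun j hj => IH j hj) h
end
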